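/- Let T be a finite tree on vertex set V with nonnegative edge lengths, each at most L > 0, and let d be the associated tree metric. Let ε ≥ 0 and let d̃_pre : V × V → [0, ∞] be a symmetric function such that d(u, v) ≤ d̃_pre(u, v) for all u, v ∈ V, and d̃_pre(u, v) ≤ d(u, v) + ε for all u, v ∈ V with d(u, v) ≤ 3L. Define the shortest path metric d̃(u, v) = the minimum over all finite sequences u = w_0, w_1, …, w_k = v of vertices of ∑_{i=1}^{k} d̃_pre(w_{i−1}, w_i). Then for all u, v ∈ V: d(u, v) ≤ d̃(u, v) ≤ d(u, v) + (d(u, v)/L + 1)·ε. -/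

import Mathlib

open SimpleGraph ENNReal

/-- `d` is the tree metric on the tree `G` with (nonnegative, symmetric) edge lengths `ℓ`:
the distance between two vertices is the sum of the edge lengths along any (hence, in a tree,
the unique) path between them. -/
def IsTreeMetric {V : Type*} (G : SimpleGraph V) (ℓ : V → V → ℝ) (d : V → V → ℝ) : Prop :=
  G.IsTree ∧ (∀ u v : V, G.Adj u v → ℓ u v = ℓ v u) ∧ (∀ u v : V, G.Adj u v → 0 ≤ ℓ u v) ∧
  ∀ (u v : V) (p : G.Walk u v), p.IsPath →
    d u v = (p.darts.map fun dd => ℓ dd.fst dd.snd).sum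

/-- The shortest path metric associated to a (possibly infinite-valued) distance estimate
`dpre`: the infimum over all finite sequences of vertices joining `u` to `v` of the total
`dpre`-length of the sequence. -/
noncomputable def spMetric {V : Type*} (dpre : V → V → ℝ≥0∞) (u v : V) : ℝ≥0∞ :=
  ⨅ (k : ℕ) (w : ℕ → V) (_ : w 0 = u) (_ : w k = v),
    ∑ i ∈ Finset.range k, dpre (w i) (w (i + 1))

namespace SPMAux

variable {V : Type*} [DecidableEq V] {G : SimpleGraph V}

/-- The total length of a walk. -/
def wW (ℓ : V → V → ℝ) {a b : V} (p : G.Walk a b) : ℝ :=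
  (p.darts.map fun dd => ℓ dd.fst dd.snd).sum

@[simp] lemma wW_nil (ℓ : V → V → ℝ) (a : V) :
    wW ℓ (Walk.nil : G.Walk a a) = 0 := rfl

@[simp] lemma wW_cons (ℓ : V → V → ℝ) {a b c : V} (h : G.Adj a b) (p : G.Walk b c) :
    wW ℓ (Walk.cons h p) = ℓ a b + wW ℓ p := by
  simp [wW]

@[simp] lemma wW_append (ℓ : V → V → ℝ) {a b c : V} (p : G.Walk a b) (q : G.Walk b c) :
    wW ℓ (p.append q) = wW ℓ p + wW ℓ q := by
  simp [wW, Walk.darts_append]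

lemma wW_nonneg {ℓ : V → V → ℝ} (hℓ : ∀ u v : V, G.Adj u v → 0 ≤ ℓ u v)
    {a b : V} (p : G.Walk a b) : 0 ≤ wW ℓ p := by
  induction p with
  | nil => simp
  | cons h p ih => simpa using add_nonneg (hℓ _ _ h) ih

lemma sublist_sum_le {l₁ l₂ : List ℝ} (h : List.Sublist l₁ l₂) (hn : ∀ x ∈ l₂, 0 ≤ x) :
    l₁.sum ≤ l₂.sum := by
  induction h with
  | slnil => simp
  | cons a h ih =>
      simp only [List.sum_cons]
      have := ih (fun x hx => hn x (List.mem_cons_of_mem _ hx))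
      have ha := hn a (List.mem_cons_self)
      linarith
  | cons_cons a h ih =>
      simp only [List.sum_cons]
      have := ih (fun x hx => hn x (List.mem_cons_of_mem _ hx))
      linarith

lemma wW_bypass_le {ℓ : V → V → ℝ} (hℓ : ∀ u v : V, G.Adj u v → 0 ≤ ℓ u v)
    {a b : V} (p : G.Walk a b) : wW ℓ p.bypass ≤ wW ℓ p := by
  have hnodup : p.bypass.darts.Nodup :=
    Walk.darts_nodup_of_support_nodup p.bypass_isPath.support_nodup
  obtain ⟨l, hperm, hsub⟩ := hnodup.subperm (Walk.darts_bypass_subset p)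
  have h1 : wW ℓ p.bypass = (l.map fun dd => ℓ dd.fst dd.snd).sum :=
    (List.Perm.sum_eq (hperm.map _)).symm
  have h2 : (l.map fun dd => ℓ dd.fst dd.snd).sum ≤ wW ℓ p := by
    refine sublist_sum_le (hsub.map _) ?_
    intro x hx
    simp only [List.mem_map] at hx
    obtain ⟨dd, _, rfl⟩ := hx
    exact hℓ _ _ dd.adj
  exact h1.trans_le h2

variable {ℓ d : V → V → ℝ}

lemma d_eq_wW (hd : IsTreeMetric G ℓ d) {a b : V} (p : G.Walk a b) (hp : p.IsPath) :
    d a b = wW ℓ p := hd.2.2.2 a b p hp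

lemma d_le_wW (hd : IsTreeMetric G ℓ d) {a b : V} (p : G.Walk a b) :
    d a b ≤ wW ℓ p := by
  rw [d_eq_wW hd p.bypass p.bypass_isPath]
  exact wW_bypass_le hd.2.2.1 p

lemma d_nonneg (hd : IsTreeMetric G ℓ d) (a b : V) (h : G.Reachable a b) : 0 ≤ d a b := by
  obtain ⟨p⟩ := h
  calc (0:ℝ) ≤ wW ℓ p.bypass := wW_nonneg hd.2.2.1 _
  _ = d a b := (d_eq_wW hd p.bypass p.bypass_isPath).symm

lemma d_self (hd : IsTreeMetric G ℓ d) (a : V) : d a a = 0 := by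
  simpa using d_eq_wW hd (Walk.nil : G.Walk a a) Walk.IsPath.nil

lemma d_triangle (hd : IsTreeMetric G ℓ d) (a b c : V) :
    d a c ≤ d a b + d b c := by
  obtain ⟨p⟩ := hd.1.isConnected a b
  obtain ⟨q⟩ := hd.1.isConnected b c
  calc d a c ≤ wW ℓ (p.bypass.append q.bypass) := d_le_wW hd _
    _ = wW ℓ p.bypass + wW ℓ q.bypass := wW_append ℓ _ _
    _ = d a b + d b c := by
        rw [d_eq_wW hd p.bypass p.bypass_isPath, d_eq_wW hd q.bypass q.bypass_isPath]

/-- Generalized triangle inequality along a sequence. -/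
lemma d_triangle_seq (hd : IsTreeMetric G ℓ d) (w : ℕ → V) :
    ∀ k : ℕ, d (w 0) (w k) ≤ ∑ i ∈ Finset.range k, d (w i) (w (i + 1)) := by
  intro k
  induction k with
  | zero => simp [d_self hd]
  | succ k ih =>
      rw [Finset.sum_range_succ]
      calc d (w 0) (w (k+1)) ≤ d (w 0) (w k) + d (w k) (w (k+1)) := d_triangle hd _ _ _
        _ ≤ _ := by linarith

/-- One-step prefix of a sequence : take the single hop `u → v`. -/
lemma spMetric_le_dpre (dpre : V → V → ℝ≥0∞) (u v : V) :
    spMetric dpre u v ≤ dpre u v := by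
  have : spMetric dpre u v ≤ ∑ i ∈ Finset.range 1,
      dpre ((fun i => if i = 0 then u else v) i) ((fun i => if i = 0 then u else v) (i + 1)) := by
    refine iInf_le_of_le 1 (iInf_le_of_le (fun i => if i = 0 then u else v)
      (iInf_le_of_le rfl (iInf_le_of_le rfl le_rfl)))
  simpa using this

lemma spMetric_prepend (dpre : V → V → ℝ≥0∞) (u x v : V) :
    spMetric dpre u v ≤ dpre u x + spMetric dpre x v := by
  have key : ∀ (k : ℕ) (w : ℕ → V), w 0 = x → w k = v →
      spMetric dpre u v ≤ dpre u x + ∑ i ∈ Finset.range k, dpre (w i) (w (i + 1)) := by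
    intro k w h0 hk
    set w' : ℕ → V := fun i => if i = 0 then u else w (i - 1) with hw'
    have h0' : w' 0 = u := rfl
    have hk' : w' (k + 1) = v := by simp [hw', hk]
    have hle : spMetric dpre u v ≤ ∑ i ∈ Finset.range (k+1), dpre (w' i) (w' (i + 1)) :=
      iInf_le_of_le (k+1) (iInf_le_of_le w' (iInf_le_of_le h0' (iInf_le_of_le hk' le_rfl)))
    refine hle.trans ?_
    rw [Finset.sum_range_succ']
    have h00 : dpre (w' 0) (w' 1) = dpre u x := by simp [hw', h0]
    have hterms : ∀ i ∈ Finset.range k,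
        dpre (w' (i + 1)) (w' (i + 1 + 1)) = dpre (w i) (w (i + 1)) := by
      intro i _; simp [hw']
    rw [h00, Finset.sum_congr rfl hterms, add_comm]
  conv_rhs => rw [spMetric]
  rw [ENNReal.add_iInf]
  refine le_iInf fun k => ?_
  rw [ENNReal.add_iInf]
  refine le_iInf fun w => ?_
  rw [ENNReal.add_iInf]
  refine le_iInf fun h0 => ?_
  rw [ENNReal.add_iInf]
  refine le_iInf fun hk => ?_
  exact key k w h0 hk

/-- Split a walk at the first prefix of weight exceeding `t`. -/
lemma split_walk {L : ℝ} (hL : 0 < L) (hedge : ∀ u v : V, G.Adj u v → ℓ u v ≤ L) :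
    ∀ {a b : V} (p : G.Walk a b) (t : ℝ), 0 ≤ t → t < wW ℓ p →
      ∃ (x : V) (p₁ : G.Walk a x) (p₂ : G.Walk x b),
        p = p₁.append p₂ ∧ t < wW ℓ p₁ ∧ wW ℓ p₁ ≤ t + L ∧ 0 < p₁.length := by
  intro a b p
  induction p with
  | nil => intro t ht h; simp at h; linarith
  | @cons a a' b h q ih =>
      intro t ht hlt
      rw [wW_cons] at hlt
      by_cases hta : t < ℓ a a'
      · refine ⟨a', Walk.cons h Walk.nil, q, by simp, ?_, ?_, by simp⟩
        · rw [wW_cons, wW_nil]; linarith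
        · rw [wW_cons, wW_nil]; have := hedge _ _ h; linarith
      · push_neg at hta
        obtain ⟨x, q₁, q₂, hq, h1, h2, h3⟩ := ih (t - ℓ a a') (by linarith) (by linarith)
        refine ⟨x, Walk.cons h q₁, q₂, by rw [hq]; rfl, ?_, ?_, by simp⟩
        · rw [wW_cons]; linarith
        · rw [wW_cons]; linarith

lemma upper_small (hd : IsTreeMetric G ℓ d) {L : ℝ} (hL : 0 < L)
    {ε : ℝ} (hε : 0 ≤ ε) (dpre : V → V → ℝ≥0∞)
    (hupp : ∀ u v : V, d u v ≤ 3 * L → dpre u v ≤ ENNReal.ofReal (d u v + ε))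
    {u v : V} (p : G.Walk u v) (hp : p.IsPath) (hW : wW ℓ p ≤ 2 * L) :
    spMetric dpre u v ≤ ENNReal.ofReal (wW ℓ p + (wW ℓ p / L + 1) * ε) := by
  have hWnn := wW_nonneg hd.2.2.1 p
  have hda : d u v = wW ℓ p := d_eq_wW hd p hp
  have h3 : d u v ≤ 3 * L := by rw [hda]; linarith
  calc spMetric dpre u v ≤ dpre u v := spMetric_le_dpre dpre u v
    _ ≤ ENNReal.ofReal (d u v + ε) := hupp u v h3
    _ ≤ _ := by
        apply ENNReal.ofReal_le_ofReal
        rw [hda]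
        have hdiv : 0 ≤ wW ℓ p / L := div_nonneg hWnn hL.le
        nlinarith

lemma upper_main (hd : IsTreeMetric G ℓ d) {L : ℝ} (hL : 0 < L)
    (hedge : ∀ u v : V, G.Adj u v → ℓ u v ≤ L)
    {ε : ℝ} (hε : 0 ≤ ε) (dpre : V → V → ℝ≥0∞)
    (hupp : ∀ u v : V, d u v ≤ 3 * L → dpre u v ≤ ENNReal.ofReal (d u v + ε)) :
    ∀ (n : ℕ) {u v : V} (p : G.Walk u v), p.length ≤ n → p.IsPath →
      spMetric dpre u v ≤ ENNReal.ofReal (wW ℓ p + (wW ℓ p / L + 1) * ε) := by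
  intro n
  induction n with
  | zero =>
      intro u v p hlen hp
      have hdarts : p.darts = [] := by
        have := p.length_darts
        exact List.length_eq_zero_iff.mp (by omega)
      have hW : wW ℓ p ≤ 2 * L := by
        have : wW ℓ p = 0 := by simp [wW, hdarts]
        linarith
      exact upper_small hd hL hε dpre hupp p hp hW
  | succ n ih =>
      intro u v p hlen hp
      by_cases hW : wW ℓ p ≤ 2 * L
      · exact upper_small hd hL hε dpre hupp p hp hW
      · push_neg at hW
        obtain ⟨x, p₁, p₂, hsplit, hL1, hL2, hlen1⟩ :=
          split_walk hL hedge p L hL.le (by linarith)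
        have hp' := hp
        rw [hsplit] at hp'
        have hp1 : p₁.IsPath := hp'.of_append_left
        have hp2 : p₂.IsPath := hp'.of_append_right
        have hWsum : wW ℓ p = wW ℓ p₁ + wW ℓ p₂ := by rw [hsplit, wW_append]
        have hlen2 : p₂.length ≤ n := by
          have := congrArg Walk.length hsplit
          rw [Walk.length_append] at this
          omega
        have hd1 : d u x = wW ℓ p₁ := d_eq_wW hd p₁ hp1
        have hdpre1 : dpre u x ≤ ENNReal.ofReal (wW ℓ p₁ + ε) := by
          have := hupp u x (by rw [hd1]; linarith)
          rwa [hd1] at this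
        have IH := ih p₂ hlen2 hp2
        have hq2nn : 0 ≤ wW ℓ p₂ := wW_nonneg hd.2.2.1 p₂
        have h2nn : 0 ≤ wW ℓ p₂ + (wW ℓ p₂ / L + 1) * ε := by
          have : 0 ≤ wW ℓ p₂ / L := div_nonneg hq2nn hL.le
          nlinarith
        calc spMetric dpre u v ≤ dpre u x + spMetric dpre x v :=
              spMetric_prepend dpre u x v
          _ ≤ ENNReal.ofReal (wW ℓ p₁ + ε) +
              ENNReal.ofReal (wW ℓ p₂ + (wW ℓ p₂ / L + 1) * ε) := add_le_add hdpre1 IH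
          _ = ENNReal.ofReal ((wW ℓ p₁ + ε) + (wW ℓ p₂ + (wW ℓ p₂ / L + 1) * ε)) :=
              (ENNReal.ofReal_add (by linarith) h2nn).symm
          _ ≤ _ := by
              apply ENNReal.ofReal_le_ofReal
              rw [hWsum, add_div]
              have h1 : 1 ≤ wW ℓ p₁ / L := (one_le_div hL).mpr hL1.le
              have h2 : 0 ≤ wW ℓ p₂ / L := div_nonneg hq2nn hL.le
              nlinarith [mul_le_mul_of_nonneg_right h1 hε]

end SPMAux

/-- **The shortest path metric of upper confidence bounds approximates the tree metric.** Let
`d` be a tree metric on a finite tree with edge lengths at most `L`, and let `d̃_pre` be a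
symmetric estimate with `d ≤ d̃_pre` everywhere and `d̃_pre(u,v) ≤ d(u,v) + ε` whenever
`d(u,v) ≤ 3L`. Then the shortest path metric `d̃` of `d̃_pre` satisfies
`d(u,v) ≤ d̃(u,v) ≤ d(u,v) + (d(u,v)/L + 1)·ε` for all `u, v`. -/
theorem shortest_path_metric_approximates
    {V : Type*} [Fintype V]
    (G : SimpleGraph V) (ℓ d : V → V → ℝ) (hd : IsTreeMetric G ℓ d)
    (L : ℝ) (hL : 0 < L) (hedge : ∀ u v : V, G.Adj u v → ℓ u v ≤ L)
    (ε : ℝ) (hε : 0 ≤ ε)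
    (dpre : V → V → ℝ≥0∞)
    (hsymm : ∀ u v : V, dpre u v = dpre v u)
    (hlow : ∀ u v : V, ENNReal.ofReal (d u v) ≤ dpre u v)
    (hupp : ∀ u v : V, d u v ≤ 3 * L → dpre u v ≤ ENNReal.ofReal (d u v + ε)) :
    ∀ u v : V,
      ENNReal.ofReal (d u v) ≤ spMetric dpre u v ∧
      spMetric dpre u v ≤ ENNReal.ofReal (d u v + (d u v / L + 1) * ε) := by
  classical
  intro u v
  constructor
  · rw [spMetric]
    refine le_iInf fun k => le_iInf fun w => le_iInf fun h0 => le_iInf fun hk => ?_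
    have htri := SPMAux.d_triangle_seq hd w k
    rw [h0, hk] at htri
    calc ENNReal.ofReal (d u v)
        ≤ ENNReal.ofReal (∑ i ∈ Finset.range k, d (w i) (w (i + 1))) :=
          ENNReal.ofReal_le_ofReal htri
      _ = ∑ i ∈ Finset.range k, ENNReal.ofReal (d (w i) (w (i + 1))) :=
          ENNReal.ofReal_sum_of_nonneg fun i _ =>
            SPMAux.d_nonneg hd _ _ (hd.1.isConnected.preconnected _ _)
      _ ≤ ∑ i ∈ Finset.range k, dpre (w i) (w (i + 1)) :=
          Finset.sum_le_sum fun i _ => hlow _ _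
  · obtain ⟨p0⟩ := hd.1.isConnected.preconnected u v
    have hp : p0.bypass.IsPath := p0.bypass_isPath
    have := SPMAux.upper_main hd hL hedge hε dpre hupp p0.bypass.length p0.bypass le_rfl hp
    rwa [← SPMAux.d_eq_wW hd p0.bypass hp] at this
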